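/- Suppose the prime p does not divide the order of G. If B is a commutative group and f : H → B is a group homomorphism whose kernel contains the center of H, then the kernel of f contains the kernel of the projection π : H → G (the restriction to H of the coordinate projection M ⋊ G → G); equivalently, f factors as f = g ∘ π for some homomorphism g : G → B. In particular, every abelian quotient of H/Z(H) (a model of G^{∼ℤ/p}) is a quotient of G. -/

import Mathlib

open Multiplicative

/-- The shift action of `g : G` on functions `(G × A) → R`:
`(g · α)(h, a) = α (g⁻¹h, a)`. -/
def cayAct {G A : Type*} (R : Type*) [Group G] [AddCommGroup R] (g : G) :
    ((G × A) → R) ≃+ ((G × A) → R) where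
  toFun α := fun x => α (g⁻¹ * x.1, x.2)
  invFun α := fun x => α (g * x.1, x.2)
  left_inv := by intro α; funext x; simp
  right_inv := by intro α; funext x; simp
  map_add' := by intro α β; rfl

/-- The action of `G` on the (multiplicatively written) additive group `M` of
functions `(G × A) → R`, as a homomorphism into the automorphism group; it is
used to form the semidirect product `M ⋊ G`. -/
def cayHom (G A R : Type*) [Group G] [AddCommGroup R] :
    G →* MulAut (Multiplicative ((G × A) → R)) where
  toFun g := AddEquiv.toMultiplicative (cayAct R g)
  map_one' := by
    apply MulEquiv.ext
    intro α
    apply Multiplicative.toAdd.injective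
    funext x
    simp [cayAct, AddEquiv.toMultiplicative]
  map_mul' := by
    intro g h
    apply MulEquiv.ext
    intro α
    apply Multiplicative.toAdd.injective
    funext x
    simp [cayAct, AddEquiv.toMultiplicative, mul_assoc]

/-- The generator `(δ_{(1,a)}, φ a)` of `M ⋊ G`. -/
def cayGen {G A : Type*} (R : Type*) [Group G] [AddCommGroup R] [One R]
    [DecidableEq G] [DecidableEq A] (φ : A → G) (a : A) :
    Multiplicative ((G × A) → R) ⋊[cayHom G A R] G :=
  ⟨ofAdd (fun x => if x = ((1 : G), a) then (1 : R) else 0), φ a⟩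

/-- The model `H` of the universal Gaschütz `p`-extension `G^{ℤ/p}`: the subgroup
of `M ⋊ G` generated by the elements `(δ_{(1,a)}, φ a)` for `a ∈ A`. -/
def gaschutzH (G A : Type*) [Group G] [DecidableEq G] [DecidableEq A]
    (p : ℕ) (φ : A → G) :
    Subgroup (Multiplicative ((G × A) → ZMod p) ⋊[cayHom G A (ZMod p)] G) :=
  Subgroup.closure (Set.range (cayGen (ZMod p) φ))

/-- The projection `π : H → G`, the restriction to `H` of `M ⋊ G → G`. -/
def gaschutzPi (G A : Type*) [Group G] [DecidableEq G] [DecidableEq A]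
    (p : ℕ) (φ : A → G) : gaschutzH G A p φ →* G :=
  SemidirectProduct.rightHom.comp (gaschutzH G A p φ).subtype

section Aux
variable {G A R : Type*} [Group G] [AddCommGroup R]

local notation "SP" => Multiplicative ((G × A) → R) ⋊[cayHom G A R] G

lemma comm_of_right_one {a b : SP} (ha : a.right = 1) (hb : b.right = 1) :
    Commute a b := by
  show a * b = b * a
  ext
  · simp [SemidirectProduct.mul_left, ha, hb, mul_comm]
  · simp [SemidirectProduct.mul_right, ha, hb]

lemma conj_of_right_one (h x : SP) (hx : x.right = 1) :
    h * x * h⁻¹ = SemidirectProduct.inl (cayHom G A R h.right x.left) := by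
  ext
  · simp only [SemidirectProduct.mul_left, SemidirectProduct.inv_left, hx, mul_one,
      SemidirectProduct.mul_right, SemidirectProduct.left_inl, map_mul, map_inv,
      MulAut.inv_def, MulEquiv.apply_symm_apply]
    rw [mul_comm h.left, mul_assoc]
    simp
  · simp [SemidirectProduct.mul_right, SemidirectProduct.inv_right, hx]

lemma central_of_fixed (c : Multiplicative ((G × A) → R))
    (hc : ∀ g : G, cayHom G A R g c = c) (y : SP) :
    y * SemidirectProduct.inl c = SemidirectProduct.inl c * y := by
  ext
  · simp [SemidirectProduct.mul_left, hc, mul_comm]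
  · simp [SemidirectProduct.mul_right]

lemma eq_inl_of_right_one (x : SP) (hx : x.right = 1) :
    x = SemidirectProduct.inl x.left := by
  ext
  · simp
  · simp [hx]

end Aux

lemma pow_p_eq_one {G A : Type*} (p : ℕ)
    (l : Multiplicative ((G × A) → ZMod p)) : l ^ p = 1 := by
  apply Multiplicative.toAdd.injective
  rw [toAdd_pow]
  funext x
  simp [nsmul_eq_mul, ZMod.natCast_self]

/-- Abbreviation for the ambient semidirect product. -/
abbrev gaschutzSP (G A : Type*) [Group G] (p : ℕ) :=
  Multiplicative ((G × A) → ZMod p) ⋊[cayHom G A (ZMod p)] G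

/-- Suppose `p ∤ |G|`.  If `B` is commutative and
`f : H →* B` kills the center of `H = G^{ℤ/p}`, then `f` kills the kernel of
the projection `π : H → G`, i.e. `f` factors through `π`.  In particular every
abelian quotient of `H/Z(H) = G^{∼ℤ/p}` is a quotient of `G`. -/
theorem abelian_quotients_of_gaschutz
    {G A : Type*} [Group G] [Fintype G] [Fintype A] [DecidableEq G] [DecidableEq A]
    (hA : 2 ≤ Fintype.card A)
    (p : ℕ) (hp : p.Prime) (hpG : ¬ p ∣ Fintype.card G)
    (φ : A → G) (hgen : Subgroup.closure (Set.range φ) = ⊤)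
    (B : Type*) [CommGroup B]
    (f : gaschutzH G A p φ →* B)
    (hf : Subgroup.center (gaschutzH G A p φ) ≤ f.ker) :
    (MonoidHom.ker (gaschutzPi G A p φ) ≤ f.ker) ∧
    ∃ g : G →* B, f = g.comp (gaschutzPi G A p φ) := by
  classical
  have hsurj : Function.Surjective (gaschutzPi G A p φ) := by
    intro g
    have hg : g ∈ Subgroup.map (SemidirectProduct.rightHom) (gaschutzH G A p φ) := by
      rw [gaschutzH, MonoidHom.map_closure]
      have h1 : (SemidirectProduct.rightHom : gaschutzSP G A p →* G) ''
          (Set.range (cayGen (ZMod p) φ)) = Set.range φ := by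
        rw [← Set.range_comp]; rfl
      rw [h1, hgen]
      exact Subgroup.mem_top g
    obtain ⟨x, hx, hxg⟩ := hg
    exact ⟨⟨x, hx⟩, hxg⟩
  have hker : MonoidHom.ker (gaschutzPi G A p φ) ≤ f.ker := by
    intro x hx
    have hxr : (↑x : gaschutzSP G A p).right = 1 := MonoidHom.mem_ker.mp hx
    choose lf hlf using hsurj
    set xl := (↑x : gaschutzSP G A p).left with hxl
    set cg : G → gaschutzH G A p φ := fun g => lf g * x * (lf g)⁻¹ with hcgdef
    have hcgval : ∀ g : G, (↑(cg g) : gaschutzSP G A p)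
        = SemidirectProduct.inl (cayHom G A (ZMod p) g xl) := by
      intro g
      have h2 : (↑(cg g) : gaschutzSP G A p)
          = (↑(lf g) : gaschutzSP G A p) * (↑x : gaschutzSP G A p)
            * (↑(lf g) : gaschutzSP G A p)⁻¹ := rfl
      rw [h2, conj_of_right_one _ _ hxr,
        show (↑(lf g) : gaschutzSP G A p).right = g from hlf g]
    have hcomm : (↑(Finset.univ : Finset G) : Set G).Pairwise fun a b => Commute (cg a) (cg b) := by
      intro a _ b _ _
      have h3 : Commute (↑(cg a) : gaschutzSP G A p) (↑(cg b) : gaschutzSP G A p) := by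
        rw [hcgval a, hcgval b]
        exact comm_of_right_one (SemidirectProduct.right_inl _) (SemidirectProduct.right_inl _)
      exact Subtype.ext h3
    set z : gaschutzH G A p φ := Finset.univ.noncommProd cg hcomm with hzdef
    set c : Multiplicative ((G × A) → ZMod p) :=
      ∏ g : G, cayHom G A (ZMod p) g xl with hcdef
    have hcfix : ∀ h : G, cayHom G A (ZMod p) h c = c := by
      intro h
      rw [hcdef, map_prod]
      exact Fintype.prod_equiv (Equiv.mulLeft h) _ _ (fun g => by
        rw [← MulAut.mul_apply, ← map_mul]; rfl)
    have hzval : (↑z : gaschutzSP G A p) = SemidirectProduct.inl c := by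
      show (gaschutzH G A p φ).subtype z = _
      rw [hzdef, Finset.map_noncommProd]
      have h5 : Finset.univ.noncommProd (fun g => (gaschutzH G A p φ).subtype (cg g))
          (fun a ha b hb hab => (hcomm.of_refl ha hb).map (gaschutzH G A p φ).subtype)
          = Finset.univ.noncommProd
            (fun g => (SemidirectProduct.inl (cayHom G A (ZMod p) g xl) : gaschutzSP G A p))
            (fun a _ b _ _ => comm_of_right_one (SemidirectProduct.right_inl _)
              (SemidirectProduct.right_inl _)) :=
        Finset.noncommProd_congr rfl (fun g _ => hcgval g) _
      rw [h5, hcdef, ← Finset.noncommProd_eq_prod]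
      exact (Finset.map_noncommProd _ _ _ _).symm
    have hzc : z ∈ Subgroup.center (gaschutzH G A p φ) := by
      rw [Subgroup.mem_center_iff]
      intro y
      apply Subtype.ext
      show (↑y : gaschutzSP G A p) * ↑z = ↑z * ↑y
      rw [hzval]
      exact central_of_fixed c hcfix _
    have hfz : f z = 1 := hf hzc
    have hconst : ∀ g ∈ (Finset.univ : Finset G), f (cg g) = f x := by
      intro g _
      show f (lf g * x * (lf g)⁻¹) = f x
      rw [map_mul, map_mul, map_inv, mul_comm (f (lf g)) (f x), mul_assoc]
      simp
    have hfzpow : f z = f x ^ Fintype.card G := by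
      rw [hzdef, Finset.map_noncommProd]
      exact (Finset.noncommProd_eq_pow_card _ _ _ (f x) hconst).trans (by rw [Finset.card_univ])
    have hG1 : f x ^ Fintype.card G = 1 := by rw [← hfzpow, hfz]
    have hxv : (↑x : gaschutzSP G A p) = SemidirectProduct.inl xl :=
      eq_inl_of_right_one _ hxr
    have hxp : x ^ p = 1 := by
      apply Subtype.ext
      rw [OneMemClass.coe_one, SubgroupClass.coe_pow, hxv, ← map_pow, pow_p_eq_one, map_one]
    have hp1 : f x ^ p = 1 := by rw [← map_pow, hxp, map_one]
    have hdvd : orderOf (f x) ∣ Nat.gcd p (Fintype.card G) :=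
      Nat.dvd_gcd (orderOf_dvd_of_pow_eq_one hp1) (orderOf_dvd_of_pow_eq_one hG1)
    have hco : Nat.Coprime p (Fintype.card G) := (Nat.Prime.coprime_iff_not_dvd hp).mpr hpG
    rw [Nat.Coprime] at hco
    rw [hco, Nat.dvd_one] at hdvd
    exact MonoidHom.mem_ker.mpr (orderOf_eq_one_iff.mp hdvd)
  refine ⟨hker, ?_⟩
  exact ⟨(gaschutzPi G A p φ).liftOfRightInverse (Function.surjInv hsurj)
    (Function.rightInverse_surjInv hsurj) ⟨f, hker⟩,
    ((gaschutzPi G A p φ).liftOfRightInverse_comp (Function.surjInv hsurj)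
    (Function.rightInverse_surjInv hsurj) ⟨f, hker⟩).symm⟩
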